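/- (Structure-preserving interconnection of multiply coupled PH-DAEs.) Let N ≥ 2 and for each i ∈ {1,…,N} let E_i ∈ ℝ^{k_i×n_i}, J_i ∈ ℝ^{k_i×k_i}, B̂_i ∈ ℝ^{k_i×m̂_i}, B̄_i ∈ ℝ^{k_i×m̄_i}, let z_i : ℝ^{n_i} → ℝ^{k_i} and r_i : ℝ^{k_i} → ℝ^{k_i} be continuous, let V_i ⊆ ℝ^{k_i} be a subspace on which J_i is skew-symmetric (vᵀJ_i w = −wᵀJ_i v for v,w ∈ V_i) and r_i is accretive (vᵀr_i(v) ≥ 0 for v ∈ V_i), and let H_i be continuously differentiable with ∇H_i(x) = E_iᵀ z_i(x) whenever z_i(x) ∈ V_i. Let Ĉ_{i,j} ∈ ℝ^{m̂_i×m̂_j} for i ≠ j satisfy the skew-symmetry condition Ĉ_{j,i} = −Ĉ_{i,j}ᵀ. Suppose on [t₀,t₁] each x_i is differentiable with z_i∘x_i continuous and z_i(x_i(t)) ∈ V_i, each ū_i is continuous, and d/dt (E_i x_i(t)) = J_i z_i(x_i(t)) − r_i(z_i(x_i(t))) + B̂_i û_i(t) + B̄_i ū_i(t), where ŷ_j(t)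 := B̂_jᵀ z_j(x_j(t)) and the coupling û_i(t) + Σ_{j≠i} Ĉ_{i,j} ŷ_j(t) = 0 holds. Then the total Hamiltonian H := Σ_i H_i satisfies Σ_i H_i(x_i(t₁)) − Σ_i H_i(x_i(t₀)) ≤ ∫_{t₀}^{t₁} Σ_i ū_i(t)ᵀ B̄_iᵀ z_i(x_i(t)) dt. -/

import Mathlib

open Matrix MeasureTheory

private lemma dot_sum_right {m ι : Type*} [Fintype m] (s : Finset ι)
    (v : m → ℝ) (w : ι → m → ℝ) :
    v ⬝ᵥ (∑ j ∈ s, w j) = ∑ j ∈ s, v ⬝ᵥ w j := by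
  simp only [dotProduct, Finset.sum_apply, Finset.mul_sum]
  exact Finset.sum_comm

private lemma sum_erase_antisymm {N : ℕ} (a : Fin N → Fin N → ℝ)
    (h : ∀ i j, i ≠ j → a j i = - a i j) :
    ∑ i, ∑ j ∈ Finset.univ.erase i, a i j = 0 := by
  set b : Fin N → Fin N → ℝ := fun i j => if i = j then 0 else a i j with hb
  have hanti : ∀ i j, b j i = - b i j := by
    intro i j
    by_cases hij : i = j
    · subst hij; simp [b]
    · simp only [b, if_neg (Ne.symm hij), if_neg hij]
      exact h i j hij
  have h1 : ∀ i, ∑ j ∈ Finset.univ.erase i, a i j = ∑ j, b i j := by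
    intro i
    rw [← Finset.sum_erase Finset.univ (by simp [b] : b i i = 0)]
    refine Finset.sum_congr rfl fun j hj => ?_
    have : i ≠ j := fun hij => (Finset.mem_erase.mp hj).1 hij.symm
    simp [b, this]
  have hS : ∑ i, ∑ j, b i j = 0 := by
    have h2 : ∑ i, ∑ j, b i j = - ∑ i, ∑ j, b i j := by
      conv_lhs => rw [Finset.sum_comm]
      have : ∀ y : Fin N, ∑ x, b x y = -∑ x, b y x := by
        intro y
        rw [← Finset.sum_neg_distrib]
        exact Finset.sum_congr rfl fun x _ => hanti y x
      rw [Finset.sum_congr rfl fun y _ => this y, Finset.sum_neg_distrib]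
    linarith
  calc ∑ i, ∑ j ∈ Finset.univ.erase i, a i j = ∑ i, ∑ j, b i j :=
        Finset.sum_congr rfl fun i _ => h1 i
    _ = 0 := hS

private lemma contOn_mulVec {p q : ℕ} (M : Matrix (Fin p) (Fin q) ℝ)
    {f : ℝ → Fin q → ℝ} {s : Set ℝ} (hf : ContinuousOn f s) :
    ContinuousOn (fun t => M.mulVec (f t)) s := by
  have h : Continuous (M.mulVecLin) := LinearMap.continuous_of_finiteDimensional _
  simpa [Function.comp_def, Matrix.mulVecLin_apply] using h.comp_continuousOn hf

private lemma contOn_dot {p : ℕ} {f g : ℝ → Fin p → ℝ} {s : Set ℝ}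
    (hf : ContinuousOn f s) (hg : ContinuousOn g s) :
    ContinuousOn (fun t => f t ⬝ᵥ g t) s := by
  simp only [dotProduct]
  exact continuousOn_finset_sum _ fun i _ =>
    (((continuous_apply i).comp_continuousOn hf).mul
      ((continuous_apply i).comp_continuousOn hg))

/-- Structure-preserving interconnection of `N ≥ 2` port-Hamiltonian DAEs.
If the subsystems `d/dt (Eᵢ xᵢ) = Jᵢ zᵢ(xᵢ) − rᵢ(zᵢ(xᵢ)) + B̂ᵢ ûᵢ + B̄ᵢ ūᵢ` are coupled by
`ûᵢ + Σ_{j≠i} Ĉ_{i,j} ŷⱼ = 0`, `ŷⱼ = B̂ⱼᵀ zⱼ(xⱼ)`, with skew-symmetric aggregated coupling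
matrix (`Ĉ_{j,i} = −Ĉ_{i,j}ᵀ`), then the total Hamiltonian `H = Σᵢ Hᵢ` satisfies the
energy balance with respect to the external ports only. -/
theorem multiply_coupled_phdae_energy_balance {N : ℕ} (hN : 2 ≤ N)
    (k n mh mb : Fin N → ℕ)
    (E : ∀ i, Matrix (Fin (k i)) (Fin (n i)) ℝ)
    (J : ∀ i, Matrix (Fin (k i)) (Fin (k i)) ℝ)
    (Bh : ∀ i, Matrix (Fin (k i)) (Fin (mh i)) ℝ)
    (Bb : ∀ i, Matrix (Fin (k i)) (Fin (mb i)) ℝ)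
    (z : ∀ i, (Fin (n i) → ℝ) → (Fin (k i) → ℝ))
    (r : ∀ i, (Fin (k i) → ℝ) → (Fin (k i) → ℝ))
    (hz : ∀ i, Continuous (z i)) (hr : ∀ i, Continuous (r i))
    (V : ∀ i, Submodule ℝ (Fin (k i) → ℝ))
    (hJ : ∀ i, ∀ v ∈ V i, ∀ w ∈ V i,
      v ⬝ᵥ (J i).mulVec w = -(w ⬝ᵥ (J i).mulVec v))
    (hacc : ∀ i, ∀ v ∈ V i, 0 ≤ v ⬝ᵥ r i v)
    (H : ∀ i, (Fin (n i) → ℝ) → ℝ)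
    (hH : ∀ i, ContDiff ℝ 1 (H i))
    (hgrad : ∀ i x, z i x ∈ V i →
      ∀ w, fderiv ℝ (H i) x w = (E i).transpose.mulVec (z i x) ⬝ᵥ w)
    (C : ∀ i j, Matrix (Fin (mh i)) (Fin (mh j)) ℝ)
    (hC : ∀ i j, i ≠ j → C j i = -(C i j).transpose)
    (t₀ t₁ : ℝ) (ht : t₀ ≤ t₁)
    (x : ∀ i, ℝ → Fin (n i) → ℝ) (x' : ∀ i, ℝ → Fin (n i) → ℝ)
    (uh : ∀ i, ℝ → Fin (mh i) → ℝ) (ub : ∀ i, ℝ → Fin (mb i) → ℝ)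
    (hx : ∀ i, ∀ t ∈ Set.Icc t₀ t₁, HasDerivAt (x i) (x' i t) t)
    (hzx : ∀ i, ContinuousOn (fun t => z i (x i t)) (Set.Icc t₀ t₁))
    (hmem : ∀ i, ∀ t ∈ Set.Icc t₀ t₁, z i (x i t) ∈ V i)
    (hub : ∀ i, ContinuousOn (ub i) (Set.Icc t₀ t₁))
    (yh : ∀ i, ℝ → Fin (mh i) → ℝ)
    (hyh : ∀ i t, yh i t = (Bh i).transpose.mulVec (z i (x i t)))
    (hcouple : ∀ i, ∀ t ∈ Set.Icc t₀ t₁,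
      uh i t + ∑ j ∈ Finset.univ.erase i, (C i j).mulVec (yh j t) = 0)
    (hode : ∀ i, ∀ t ∈ Set.Icc t₀ t₁,
      (E i).mulVec (x' i t) = (J i).mulVec (z i (x i t)) - r i (z i (x i t)) +
        (Bh i).mulVec (uh i t) + (Bb i).mulVec (ub i t)) :
    (∑ i, H i (x i t₁)) - (∑ i, H i (x i t₀)) ≤
      ∫ t in t₀..t₁, ∑ i, ub i t ⬝ᵥ (Bb i).transpose.mulVec (z i (x i t)) := by
  have huIcc : Set.uIcc t₀ t₁ = Set.Icc t₀ t₁ := Set.uIcc_of_le ht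
  -- the coupling input expressed via the outputs
  set U : ∀ i, ℝ → Fin (mh i) → ℝ :=
    fun i t => -(∑ j ∈ Finset.univ.erase i, (C i j).mulVec (yh j t)) with hU
  have hUeq : ∀ i, ∀ t ∈ Set.Icc t₀ t₁, uh i t = U i t := by
    intro i t ht'
    have := hcouple i t ht'
    simp only [hU]
    linear_combination (norm := abel) this
  -- the derivative of the total Hamiltonian
  set D : ℝ → ℝ := fun t => ∑ i, (z i (x i t)) ⬝ᵥ
      ((J i).mulVec (z i (x i t)) - r i (z i (x i t)) +
        (Bh i).mulVec (U i t) + (Bb i).mulVec (ub i t)) with hD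
  set F : ℝ → ℝ := fun t =>
    ∑ i, ub i t ⬝ᵥ (Bb i).transpose.mulVec (z i (x i t)) with hF
  -- continuity of yh on the interval
  have hyhc : ∀ i, ContinuousOn (yh i) (Set.Icc t₀ t₁) := by
    intro i
    have : yh i = fun t => (Bh i).transpose.mulVec (z i (x i t)) := funext (hyh i)
    rw [this]
    exact contOn_mulVec _ (hzx i)
  have hUc : ∀ i, ContinuousOn (U i) (Set.Icc t₀ t₁) := by
    intro i
    simp only [hU]
    exact (continuousOn_finset_sum _ fun j _ => contOn_mulVec _ (hyhc j)).neg
  have hDc : ContinuousOn D (Set.Icc t₀ t₁) := by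
    refine continuousOn_finset_sum _ fun i _ => contOn_dot (hzx i) ?_
    exact (((contOn_mulVec _ (hzx i)).sub
      ((hr i).comp_continuousOn (hzx i))).add (contOn_mulVec _ (hUc i))).add
      (contOn_mulVec _ (hub i))
  have hFc : ContinuousOn F (Set.Icc t₀ t₁) := by
    refine continuousOn_finset_sum _ fun i _ => contOn_dot (hub i) ?_
    exact contOn_mulVec _ (hzx i)
  have hDint : IntervalIntegrable D volume t₀ t₁ :=
    (huIcc ▸ hDc).intervalIntegrable
  have hFint : IntervalIntegrable F volume t₀ t₁ :=
    (huIcc ▸ hFc).intervalIntegrable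
  -- derivative of the total Hamiltonian along the trajectory
  have hG : ∀ t ∈ Set.uIcc t₀ t₁,
      HasDerivAt (fun t => ∑ i, H i (x i t)) (D t) t := by
    rw [huIcc]
    intro t ht'
    have hterm : ∀ i : Fin N, HasDerivAt (fun t => H i (x i t))
        ((z i (x i t)) ⬝ᵥ
          ((J i).mulVec (z i (x i t)) - r i (z i (x i t)) +
            (Bh i).mulVec (U i t) + (Bb i).mulVec (ub i t))) t := by
      intro i
      have hdiff : DifferentiableAt ℝ (H i) (x i t) :=
        ((hH i).differentiable one_ne_zero) (x i t)
      have h1 : HasDerivAt (fun t => H i (x i t))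
          (fderiv ℝ (H i) (x i t) (x' i t)) t :=
        hdiff.hasFDerivAt.comp_hasDerivAt t (hx i t ht')
      have h2 : fderiv ℝ (H i) (x i t) (x' i t) =
          (z i (x i t)) ⬝ᵥ ((J i).mulVec (z i (x i t)) - r i (z i (x i t)) +
            (Bh i).mulVec (U i t) + (Bb i).mulVec (ub i t)) := by
        rw [hgrad i (x i t) (hmem i t ht') (x' i t),
          Matrix.mulVec_transpose, ← Matrix.dotProduct_mulVec,
          hode i t ht', hUeq i t ht']
      rwa [h2] at h1
    exact HasDerivAt.fun_sum fun i _ => hterm i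
  have hFTC : (∑ i, H i (x i t₁)) - (∑ i, H i (x i t₀)) = ∫ t in t₀..t₁, D t :=
    (intervalIntegral.integral_eq_sub_of_hasDerivAt hG hDint).symm
  -- pointwise bound D ≤ F on the interval
  have hDle : ∀ t ∈ Set.Icc t₀ t₁, D t ≤ F t := by
    intro t ht'
    have hJ0 : ∀ i : Fin N, z i (x i t) ⬝ᵥ (J i).mulVec (z i (x i t)) = 0 := by
      intro i
      have := hJ i _ (hmem i t ht') _ (hmem i t ht')
      linarith
    have hcoup0 : ∑ i, (z i (x i t)) ⬝ᵥ (Bh i).mulVec (U i t) = 0 := by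
      have hterm : ∀ i : Fin N, (z i (x i t)) ⬝ᵥ (Bh i).mulVec (U i t) =
          -(∑ j ∈ Finset.univ.erase i, yh i t ⬝ᵥ (C i j).mulVec (yh j t)) := by
        intro i
        rw [hU]
        simp only
        rw [Matrix.dotProduct_mulVec, ← Matrix.mulVec_transpose, ← hyh i t,
          dotProduct_neg, dot_sum_right]
      rw [Finset.sum_congr rfl fun i _ => hterm i, Finset.sum_neg_distrib,
        neg_eq_zero]
      refine sum_erase_antisymm (fun i j => yh i t ⬝ᵥ (C i j).mulVec (yh j t))
        fun i j hij => ?_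
      show yh j t ⬝ᵥ (C j i).mulVec (yh i t) = -(yh i t ⬝ᵥ (C i j).mulVec (yh j t))
      rw [hC i j hij, Matrix.neg_mulVec, dotProduct_neg, neg_inj,
        Matrix.dotProduct_mulVec, Matrix.vecMul_transpose, dotProduct_comm]
    have hexp : D t = (∑ i, z i (x i t) ⬝ᵥ (J i).mulVec (z i (x i t)))
        - (∑ i, z i (x i t) ⬝ᵥ r i (z i (x i t)))
        + (∑ i, z i (x i t) ⬝ᵥ (Bh i).mulVec (U i t))
        + (∑ i, z i (x i t) ⬝ᵥ (Bb i).mulVec (ub i t)) := by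
      rw [hD]
      simp only [dotProduct_add, dotProduct_sub]
      rw [Finset.sum_add_distrib, Finset.sum_add_distrib, Finset.sum_sub_distrib]
    have hr0 : 0 ≤ ∑ i, z i (x i t) ⬝ᵥ r i (z i (x i t)) :=
      Finset.sum_nonneg fun i _ => hacc i _ (hmem i t ht')
    have hFeq : ∑ i, z i (x i t) ⬝ᵥ (Bb i).mulVec (ub i t) = F t := by
      rw [hF]
      refine Finset.sum_congr rfl fun i _ => ?_
      rw [Matrix.dotProduct_mulVec, ← Matrix.mulVec_transpose, dotProduct_comm]
    rw [hexp, Finset.sum_congr rfl fun i _ => hJ0 i, Finset.sum_const_zero,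
      hcoup0, hFeq]
    linarith
  calc (∑ i, H i (x i t₁)) - (∑ i, H i (x i t₀)) = ∫ t in t₀..t₁, D t := hFTC
    _ ≤ ∫ t in t₀..t₁, F t := intervalIntegral.integral_mono_on ht hDint hFint hDle
    _ = _ := rfl
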